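/- Let J ≥ 1 and let E be an arbitrary subset of X = {0,…,J}^{ℤ₋}. There exists a continuous g-function g on X with g(ξ) = 0 for every exit point ξ of E (so E is invariant for g) if and only if ⋂_{j=0}^{J} (closure(E_e^c))^{*,j} = ∅. -/

import Mathlib

open Set Topology

def shiftX {J : ℕ} (ξ : ℕ → Fin (J+1)) : ℕ → Fin (J+1) := fun n => ξ (n+1)

def consX {J : ℕ} (a : Fin (J+1)) (ξ : ℕ → Fin (J+1)) : ℕ → Fin (J+1) :=
  fun n => match n with
  | 0 => a
  | m+1 => ξ m

def starX {J : ℕ} (j : Fin (J+1)) (ξ : ℕ → Fin (J+1)) : ℕ → Fin (J+1) :=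
  fun n => match n with
  | 0 => ξ 0 + j
  | m+1 => ξ (m+1)

/-- The set of exit points of `E`: points outside `E` whose shift lies in `E`. -/
def exitX {J : ℕ} (E : Set (ℕ → Fin (J+1))) : Set (ℕ → Fin (J+1)) :=
  {ξ | ξ ∉ E ∧ shiftX ξ ∈ E}

/-- A subshift: a nonempty, closed, proper, shift-invariant subset. -/
def IsSubshift {J : ℕ} (K : Set (ℕ → Fin (J+1))) : Prop :=
  K.Nonempty ∧ IsClosed K ∧ K ≠ Set.univ ∧ K = shiftX '' K

/-- The word `(w₁,…,w_m)` occurs in `ξ` if for some `i ≥ 0` the consecutive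
coordinates `(ξ(i+m−1),…,ξ(i))` equal `(w₁,…,w_m)`. -/
def OccursX {J : ℕ} (w : List (Fin (J+1))) (ξ : ℕ → Fin (J+1)) : Prop :=
  ∃ i : ℕ, ∀ k, k < w.length → ξ (i + k) = w.reverse.getD k 0

/-- A subshift of finite type: defined by a finite nonempty set of forbidden words. -/
def IsFiniteType {J : ℕ} (K : Set (ℕ → Fin (J+1))) : Prop :=
  ∃ F : Finset (List (Fin (J+1))), F.Nonempty ∧ K = {ξ | ∀ w ∈ F, ¬ OccursX w ξ}



lemma shiftX_consX {J : ℕ} (a : Fin (J+1)) (ξ : ℕ → Fin (J+1)) :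
    shiftX (consX a ξ) = ξ := rfl

lemma starX_eq_consX {J : ℕ} (j : Fin (J+1)) (ξ : ℕ → Fin (J+1)) :
    starX j ξ = consX (ξ 0 + j) (shiftX ξ) := by
  funext n; cases n <;> rfl

lemma consX_eq_starX {J : ℕ} (a : Fin (J+1)) (ξ : ℕ → Fin (J+1)) :
    consX a (shiftX ξ) = starX (a - ξ 0) ξ := by
  rw [starX_eq_consX, add_sub_cancel]

lemma continuous_consX {J : ℕ} (a : Fin (J+1)) : Continuous (consX (J := J) a) := by
  apply continuous_pi; intro n
  cases n with
  | zero => exact continuous_const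
  | succ m => exact continuous_apply m

lemma continuous_shiftX {J : ℕ} : Continuous (shiftX (J := J)) := by
  apply continuous_pi; intro n; exact continuous_apply (n+1)

/-- For an arbitrary `E ⊂ X`, there is a continuous `g`-function vanishing
on the exit points of `E` (so `E` is invariant) iff `⋂_{j=0}^{J} (closure E_e^c)^{*,j} = ∅`. -/
theorem set_has_gFunction_iff {J : ℕ} (hJ : 1 ≤ J) (E : Set (ℕ → Fin (J+1))) :
    (∃ g : (ℕ → Fin (J+1)) → ℝ, Continuous g ∧ (∀ ξ, 0 ≤ g ξ) ∧
        (∀ ξ, ∑ a : Fin (J+1), g (consX a ξ) = 1) ∧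
        (∀ ξ ∈ exitX E, g ξ = 0)) ↔
      (⋂ j : Fin (J+1), {ξ : ℕ → Fin (J+1) | starX j ξ ∈ closure (exitX E)}) = ∅ := by
  classical
  constructor
  · rintro ⟨g, hgc, _, hsum, hexit⟩
    rw [Set.eq_empty_iff_forall_notMem]
    intro ξ hξ
    simp only [Set.mem_iInter, Set.mem_setOf_eq] at hξ
    have hzero : ∀ η ∈ closure (exitX E), g η = 0 := by
      intro η hη
      have hsub : closure (exitX E) ⊆ g ⁻¹' {0} := by
        apply closure_minimal
        · intro x hx; exact hexit x hx
        · exact (isClosed_singleton).preimage hgc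
      exact hsub hη
    have h1 : ∑ a : Fin (J+1), g (consX a (shiftX ξ)) = 1 := hsum (shiftX ξ)
    have h0 : ∑ a : Fin (J+1), g (consX a (shiftX ξ)) = 0 := by
      apply Finset.sum_eq_zero
      intro a _
      rw [consX_eq_starX]
      exact hzero _ (hξ (a - ξ 0))
    rw [h0] at h1
    exact one_ne_zero h1.symm
  · intro hI
    by_cases hE : exitX E = ∅
    · refine ⟨fun _ => (1 : ℝ) / (J + 1), continuous_const, fun _ => by positivity,
        fun ξ => ?_, fun ξ hξ => by simp [hE] at hξ⟩
      rw [Finset.sum_const, Finset.card_univ, Fintype.card_fin, nsmul_eq_mul]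
      field_simp
      norm_num
    · have hCne : (closure (exitX E)).Nonempty :=
        (Set.nonempty_iff_ne_empty.mpr hE).closure
      letI : MetricSpace (ℕ → Fin (J+1)) := TopologicalSpace.metrizableSpaceMetric _
      set C := closure (exitX E) with hC
      have hCclosed : IsClosed C := isClosed_closure
      set F : (ℕ → Fin (J+1)) → ℝ := fun η => Metric.infDist η C with hF
      have hFc : Continuous F := Metric.continuous_infDist_pt C
      have hF0 : ∀ η, 0 ≤ F η := fun η => Metric.infDist_nonneg
      have hFpos : ∀ η, η ∉ C → 0 < F η := by
        intro η hη
        exact (hCclosed.notMem_iff_infDist_pos hCne).mp hη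
      -- key: for every tail ι there is a with consX a ι ∉ C
      have hkey : ∀ ι : ℕ → Fin (J+1), ∃ a, consX a ι ∉ C := by
        intro ι
        have h2 : consX 0 ι ∉ ⋂ j : Fin (J+1),
            {ξ : ℕ → Fin (J+1) | starX j ξ ∈ closure (exitX E)} := by
          rw [hI]; exact Set.notMem_empty _
        simp only [Set.mem_iInter, Set.mem_setOf_eq, not_forall] at h2
        obtain ⟨j, hj⟩ := h2
        refine ⟨0 + j, ?_⟩
        have he : consX ((0 : Fin (J+1)) + j) ι = starX j (consX 0 ι) := by
          funext n; cases n <;> rfl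
        rw [he]; exact hj
      set D : (ℕ → Fin (J+1)) → ℝ := fun η => ∑ a : Fin (J+1), F (consX a (shiftX η))
        with hD
      have hDpos : ∀ η, 0 < D η := by
        intro η
        obtain ⟨a, ha⟩ := hkey (shiftX η)
        refine Finset.sum_pos' (fun b _ => hF0 _) ⟨a, Finset.mem_univ a, hFpos _ ha⟩
      have hDc : Continuous D := by
        apply continuous_finset_sum
        intro a _
        exact hFc.comp ((continuous_consX a).comp continuous_shiftX)
      refine ⟨fun η => F η / D η, hFc.div hDc (fun η => (hDpos η).ne'),
        fun η => div_nonneg (hF0 η) (hDpos η).le, ?_, ?_⟩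
      · intro ξ
        have hDconst : ∀ a : Fin (J+1), D (consX a ξ) = D (consX 0 ξ) := fun a => by
          simp only [hD, shiftX_consX]
        have hsum : ∑ a : Fin (J+1), F (consX a ξ) = D (consX 0 ξ) := by
          simp only [hD, shiftX_consX]
        calc ∑ a : Fin (J+1), F (consX a ξ) / D (consX a ξ)
            = ∑ a : Fin (J+1), F (consX a ξ) / D (consX 0 ξ) :=
              Finset.sum_congr rfl fun a _ => by rw [hDconst a]
          _ = (∑ a : Fin (J+1), F (consX a ξ)) / D (consX 0 ξ) := by
              rw [Finset.sum_div]
          _ = 1 := by rw [hsum, div_self (hDpos _).ne']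
      · intro η hη
        have h0 : F η = 0 := Metric.infDist_zero_of_mem (subset_closure hη)
        simp only [h0, zero_div]
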